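/- (Lemma 2, coding equivalence.) Let λ ≥ 1 and δ ≥ 1 be integers, let b and c be nonnegative integers, and let k be a positive integer with k > c. Then the following two statements are equivalent: (i) there exist nonnegative integers h₁,…,h_δ with h_ι ≤ c for all ι and b = Σ_{ι=1}^{δ} h_ι·k^{(λ+1)^ι}; (ii) the conjunction of: (a) there exists a nonnegative integer d with b = d·k^{λ+1}; (b) for every ι with 1 ≤ ι ≤ δ−1 there exist nonnegative integers d and e with b = d·k^{(λ+1)^{ι+1}} + e and e < (c+1)·k^{(λ+1)^ι}; and (c) b < (c+1)·k^{(λ+1)^δ}. -/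

import Mathlib

lemma aux_exp_le (lam : ℕ) (hlam : 1 ≤ lam) (m : ℕ) :
    (lam + 1) ^ m + 1 ≤ (lam + 1) ^ (m + 1) := by
  have h1 : 1 ≤ (lam + 1) ^ m := Nat.one_le_pow _ _ (by omega)
  calc (lam + 1) ^ m + 1 ≤ (lam + 1) ^ m * 2 := by omega
    _ ≤ (lam + 1) ^ m * (lam + 1) := by
        exact Nat.mul_le_mul_left _ (by omega)
    _ = (lam + 1) ^ (m + 1) := by ring

lemma aux_sum_lt (lam c k : ℕ) (hlam : 1 ≤ lam) (hk : 0 < k) (hkc : c < k)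
    (H : ℕ → ℕ) (hH : ∀ j, H j ≤ c) :
    ∀ m, ∑ j ∈ Finset.range m, H j * k ^ ((lam + 1) ^ (j + 1))
      < (c + 1) * k ^ ((lam + 1) ^ m) := by
  intro m
  induction m with
  | zero => simp; positivity
  | succ m ih =>
      rw [Finset.sum_range_succ]
      have h1 : (c + 1) * k ^ ((lam + 1) ^ m) ≤ k ^ ((lam + 1) ^ m + 1) := by
        rw [pow_succ, mul_comm]
        exact Nat.mul_le_mul le_rfl (by omega)
      have h2 : k ^ ((lam + 1) ^ m + 1) ≤ k ^ ((lam + 1) ^ (m + 1)) :=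
        Nat.pow_le_pow_right hk (aux_exp_le lam hlam m)
      have h3 : H m * k ^ ((lam + 1) ^ (m + 1)) ≤ c * k ^ ((lam + 1) ^ (m + 1)) :=
        Nat.mul_le_mul (hH m) le_rfl
      have : ∑ j ∈ Finset.range m, H j * k ^ ((lam + 1) ^ (j + 1))
          < k ^ ((lam + 1) ^ (m + 1)) := lt_of_lt_of_le ih (le_trans h1 h2)
      calc _ < k ^ ((lam + 1) ^ (m + 1)) + c * k ^ ((lam + 1) ^ (m + 1)) := by omega
        _ = (c + 1) * k ^ ((lam + 1) ^ (m + 1)) := by ring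

lemma aux_mod_sum (lam k b : ℕ) (ha : b % k ^ (lam + 1) = 0) :
    ∀ m, b % k ^ ((lam + 1) ^ (m + 1)) =
      ∑ j ∈ Finset.range m,
        (b % k ^ ((lam + 1) ^ (j + 2))) / k ^ ((lam + 1) ^ (j + 1))
          * k ^ ((lam + 1) ^ (j + 1)) := by
  intro m
  induction m with
  | zero => simpa using ha
  | succ m ih =>
      rw [Finset.sum_range_succ, ← ih]
      have hdvd : k ^ ((lam + 1) ^ (m + 1)) ∣ k ^ ((lam + 1) ^ (m + 2)) :=
        pow_dvd_pow _ (Nat.pow_le_pow_right (by omega) (by omega))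
      have h1 : (b % k ^ ((lam + 1) ^ (m + 2))) % k ^ ((lam + 1) ^ (m + 1))
          = b % k ^ ((lam + 1) ^ (m + 1)) := Nat.mod_mod_of_dvd _ hdvd
      have e2 : b % k ^ ((lam + 1) ^ (m + 1 + 1)) = b % k ^ ((lam + 1) ^ (m + 2)) := rfl
      have := Nat.div_add_mod' (b % k ^ ((lam + 1) ^ (m + 2))) (k ^ ((lam + 1) ^ (m + 1)))
      omega

/-- Lemma 2 (coding equivalence): for `k > c`, the number `b` codes a tuple
`h₁,…,h_δ` of numbers `≤ c` via `b = Σ_{ι=1}^{δ} h_ι k^{(λ+1)^ι}` iff the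
conditions (a), (b), (c) of Lemma 2 hold. -/
theorem coding_equivalence (lam δ : ℕ) (hlam : 1 ≤ lam) (hδ : 1 ≤ δ)
    (b c k : ℕ) (hk : 0 < k) (hkc : c < k) :
    (∃ h : Fin δ → ℕ, (∀ ι : Fin δ, h ι ≤ c) ∧
        b = ∑ ι : Fin δ, h ι * k ^ ((lam + 1) ^ (ι.val + 1))) ↔
      ((∃ d : ℕ, b = d * k ^ (lam + 1)) ∧
        (∀ ι : ℕ, 1 ≤ ι → ι ≤ δ - 1 → ∃ d e : ℕ,
          b = d * k ^ ((lam + 1) ^ (ι + 1)) + e ∧ e < (c + 1) * k ^ ((lam + 1) ^ ι)) ∧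
        b < (c + 1) * k ^ ((lam + 1) ^ δ)) := by
  constructor
  · rintro ⟨h, hbound, hb⟩
    set H : ℕ → ℕ := fun j => if hj : j < δ then h ⟨j, hj⟩ else 0 with hH
    have hHle : ∀ j, H j ≤ c := by
      intro j
      by_cases hj : j < δ
      · simpa [hH, hj] using hbound ⟨j, hj⟩
      · simp [hH, hj]
    have hb' : b = ∑ j ∈ Finset.range δ, H j * k ^ ((lam + 1) ^ (j + 1)) := by
      rw [hb, ← Fin.sum_univ_eq_sum_range (fun j => H j * k ^ ((lam + 1) ^ (j + 1))) δ]
      refine Finset.sum_congr rfl fun ι _ => ?_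
      simp [hH, ι.isLt]
    refine ⟨?_, ?_, ?_⟩
    · have hdvd : k ^ (lam + 1) ∣ b := by
        rw [hb']
        refine Finset.dvd_sum fun j _ => ?_
        exact Dvd.dvd.mul_left
          (pow_dvd_pow k (Nat.le_self_pow (by omega) _)) _
      obtain ⟨d, hd⟩ := hdvd
      exact ⟨d, by rw [hd, mul_comm]⟩
    · intro ι h1 h2
      have hιδ : ι ≤ δ := by omega
      have hsplit : (∑ j ∈ Finset.Ico 0 ι, H j * k ^ ((lam + 1) ^ (j + 1)))
          + ∑ j ∈ Finset.Ico ι δ, H j * k ^ ((lam + 1) ^ (j + 1))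
          = ∑ j ∈ Finset.Ico 0 δ, H j * k ^ ((lam + 1) ^ (j + 1)) :=
        Finset.sum_Ico_consecutive _ (Nat.zero_le ι) hιδ
      have hdvd : k ^ ((lam + 1) ^ (ι + 1)) ∣
          ∑ j ∈ Finset.Ico ι δ, H j * k ^ ((lam + 1) ^ (j + 1)) := by
        refine Finset.dvd_sum fun j hj => ?_
        have : ι ≤ j := (Finset.mem_Ico.mp hj).1
        exact Dvd.dvd.mul_left
          (pow_dvd_pow k (Nat.pow_le_pow_right (by omega) (by omega))) _
      obtain ⟨d, hd⟩ := hdvd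
      refine ⟨d, ∑ j ∈ Finset.range ι, H j * k ^ ((lam + 1) ^ (j + 1)), ?_, ?_⟩
      · rw [← Finset.range_eq_Ico, ← Finset.range_eq_Ico] at hsplit
        rw [hb', ← hsplit, hd]
        ring
      · exact aux_sum_lt lam c k hlam hk hkc H hHle ι
    · rw [hb']
      exact aux_sum_lt lam c k hlam hk hkc H hHle δ
  · rintro ⟨⟨d0, ha⟩, hbcond, hc⟩
    have ha' : b % k ^ (lam + 1) = 0 := by rw [ha]; exact Nat.mul_mod_left _ _
    have hbig : b < k ^ ((lam + 1) ^ (δ + 1)) := by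
      have h1 : (c + 1) * k ^ ((lam + 1) ^ δ) ≤ k ^ ((lam + 1) ^ δ + 1) := by
        rw [pow_succ, mul_comm]
        exact Nat.mul_le_mul le_rfl (by omega)
      have h2 : k ^ ((lam + 1) ^ δ + 1) ≤ k ^ ((lam + 1) ^ (δ + 1)) :=
        Nat.pow_le_pow_right hk (aux_exp_le lam hlam δ)
      omega
    have hmod : b % k ^ ((lam + 1) ^ (δ + 1)) = b := Nat.mod_eq_of_lt hbig
    have hkey := aux_mod_sum lam k b ha' δ
    refine ⟨fun ι => (b % k ^ ((lam + 1) ^ (ι.val + 2))) / k ^ ((lam + 1) ^ (ι.val + 1)),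
      ?_, ?_⟩
    · intro ι
      have hKpos : 0 < k ^ ((lam + 1) ^ (ι.val + 1)) := pow_pos hk _
      have hgoal : b % k ^ ((lam + 1) ^ (ι.val + 2))
          < (c + 1) * k ^ ((lam + 1) ^ (ι.val + 1)) := by
        rcases Nat.lt_or_ge (ι.val + 1) δ with hlt | hge
        · obtain ⟨d, e, heq, helt⟩ := hbcond (ι.val + 1) (by omega) (by omega)
          have h1 : (c + 1) * k ^ ((lam + 1) ^ (ι.val + 1))
              ≤ k ^ ((lam + 1) ^ (ι.val + 1) + 1) := by
            rw [pow_succ, mul_comm]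
            exact Nat.mul_le_mul le_rfl (by omega)
          have h2 : k ^ ((lam + 1) ^ (ι.val + 1) + 1) ≤ k ^ ((lam + 1) ^ (ι.val + 2)) :=
            Nat.pow_le_pow_right hk (aux_exp_le lam hlam (ι.val + 1))
          have he : b % k ^ ((lam + 1) ^ (ι.val + 1 + 1)) = e := by
            rw [heq, add_comm, Nat.add_mul_mod_self_right]
            have hrs : k ^ ((lam + 1) ^ (ι.val + 1 + 1)) = k ^ ((lam + 1) ^ (ι.val + 2)) := rfl
            exact Nat.mod_eq_of_lt (by omega)
          rw [show ι.val + 2 = ι.val + 1 + 1 from rfl, he]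
          exact helt
        · have hιδ : ι.val + 1 = δ := by omega
          have : b % k ^ ((lam + 1) ^ (ι.val + 2)) = b := by
            rw [show ι.val + 2 = ι.val + 1 + 1 from rfl, hιδ, hmod]
          rw [this, hιδ]
          exact hc
      have := (Nat.div_lt_iff_lt_mul hKpos).mpr
        (by rw [mul_comm] at hgoal ⊢; exact hgoal)
      show b % k ^ ((lam + 1) ^ (ι.val + 2)) / k ^ ((lam + 1) ^ (ι.val + 1)) ≤ c
      omega
    · rw [Fin.sum_univ_eq_sum_range
        (fun j => (b % k ^ ((lam + 1) ^ (j + 2))) / k ^ ((lam + 1) ^ (j + 1))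
          * k ^ ((lam + 1) ^ (j + 1))) δ]
      rw [← hkey, hmod]
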